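/- arXiv:1008.0850 — 2 statements merged into one kernel-verified Lean document; each statement's English description precedes it below -/
import Mathlib

section
/- Let S be a subset of [0,1] with 0,1 ∈ S. Then S + ℤ is an additive subgroup of ℝ if and only if for all α, β ∈ S with α ≤ β, we have β - α ∈ S. -/
theorem stmt_0 (S : Set ℝ) (hS : S ⊆ Set.Icc 0 1) (h0 : (0:ℝ) ∈ S) (h1 : (1:ℝ) ∈ S) :
    (∃ G : AddSubgroup ℝ, (G : Set ℝ) = {x : ℝ | ∃ s ∈ S, ∃ n : ℤ, x = s + n}) ↔
      (∀ α ∈ S, ∀ β ∈ S, α ≤ β → β - α ∈ S) := by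
  constructor
  · rintro ⟨G, hG⟩ α hα β hβ hle
    have hmem : ∀ s ∈ S, s ∈ G := fun s hs => by
      rw [← SetLike.mem_coe, hG]; exact ⟨s, hs, 0, by simp⟩
    have hd : β - α ∈ G := sub_mem (hmem β hβ) (hmem α hα)
    rw [← SetLike.mem_coe, hG] at hd
    obtain ⟨s, hs, n, heq⟩ := hd
    obtain ⟨hα0, hα1⟩ := hS hα
    obtain ⟨hβ0, hβ1⟩ := hS hβ
    obtain ⟨hs0, hs1⟩ := hS hs
    have hn1 : (-1 : ℤ) ≤ n := by
      have : (-1 : ℝ) ≤ n := by linarith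
      exact_mod_cast this
    have hn2 : n ≤ 1 := by
      have : (n : ℝ) ≤ 1 := by linarith
      exact_mod_cast this
    interval_cases n
    · have : β - α = 0 := by push_cast at heq; linarith
      rw [this]; exact h0
    · have : β - α = s := by push_cast at heq; linarith
      rw [this]; exact hs
    · have : β - α = 1 := by push_cast at heq; linarith
      rw [this]; exact h1
  · intro h
    have hcompl : ∀ s ∈ S, 1 - s ∈ S := fun s hs => h s hs 1 h1 (hS hs).2
    refine ⟨⟨⟨⟨{x : ℝ | ∃ s ∈ S, ∃ n : ℤ, x = s + n}, ?_⟩, ⟨0, h0, 0, by simp⟩⟩, ?_⟩, rfl⟩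
    · rintro x y ⟨s, hs, n, rfl⟩ ⟨t, ht, m, rfl⟩
      rcases le_total (1 - t) s with hc | hc
      · exact ⟨s - (1 - t), h (1 - t) (hcompl t ht) s hs hc, n + m + 1, by push_cast; ring⟩
      · exact ⟨1 - ((1 - t) - s), hcompl _ (h s hs (1 - t) (hcompl t ht) hc), n + m, by push_cast; ring⟩
    · rintro x ⟨s, hs, n, rfl⟩
      exact ⟨1 - s, hcompl s hs, -n - 1, by push_cast; ring⟩
end

section
/- Let λ ≥ 2 and q ≥ 1 be integers, and let S = {m/(q λ^N) : N ∈ ℕ, 0 ≤ m ≤ q λ^N, m ∈ ℤ}. Then S is multiplicatively closed (i.e., y₁, y₂ ∈ S implies y₁ y₂ ∈ S) if and only if there exists K ∈ ℕ such that q divides λ^K. -/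
theorem stmt_8 (lam q : ℕ) (hlam : 2 ≤ lam) (hq : 1 ≤ q) :
    (∀ y₁ ∈ {x : ℝ | ∃ N : ℕ, ∃ m : ℤ, 0 ≤ m ∧ m ≤ (q : ℤ) * lam ^ N ∧ x = m / (q * lam ^ N)},
     ∀ y₂ ∈ {x : ℝ | ∃ N : ℕ, ∃ m : ℤ, 0 ≤ m ∧ m ≤ (q : ℤ) * lam ^ N ∧ x = m / (q * lam ^ N)},
      y₁ * y₂ ∈ {x : ℝ | ∃ N : ℕ, ∃ m : ℤ, 0 ≤ m ∧ m ≤ (q : ℤ) * lam ^ N ∧ x = m / (q * lam ^ N)})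
    ↔ ∃ K : ℕ, q ∣ lam ^ K := by
  have hqn : 0 < q := hq
  have hln : 0 < lam := by omega
  have hq0 : (q : ℝ) ≠ 0 := by exact_mod_cast hqn.ne'
  have hl0 : (lam : ℝ) ≠ 0 := by exact_mod_cast hln.ne'
  constructor
  · intro h
    have hmem : (1 : ℝ) / q ∈ {x : ℝ | ∃ N : ℕ, ∃ m : ℤ, 0 ≤ m ∧ m ≤ (q : ℤ) * lam ^ N ∧
        x = m / (q * lam ^ N)} := by
      refine ⟨0, 1, by norm_num, by simpa using (by exact_mod_cast hq : (1:ℤ) ≤ q),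
        by push_cast; ring⟩
    obtain ⟨N, m, hm0, _, heq⟩ := h _ hmem _ hmem
    have heq' : ((lam : ℤ) ^ N : ℤ) = m * q := by
      have h2 : (q : ℝ) * ((lam : ℝ) ^ N) = (q : ℝ) * ((m : ℝ) * q) := by
        have h3 : (q : ℝ) * (lam : ℝ) ^ N = (m : ℝ) * ((q : ℝ) * q) := by
          field_simp at heq; linear_combination (q:ℝ) * heq
        linear_combination h3
      have h4 : ((lam : ℝ) ^ N) = (m : ℝ) * q := mul_left_cancel₀ hq0 h2
      exact_mod_cast h4
    exact ⟨N, Int.natCast_dvd_natCast.mp ⟨m, by push_cast [heq']; ring⟩⟩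
  · rintro ⟨K, c, hc⟩ y₁ ⟨N₁, m₁, h₁0, h₁le, rfl⟩ y₂ ⟨N₂, m₂, h₂0, h₂le, rfl⟩
    have hc0 : 0 < c := by
      rcases Nat.eq_zero_or_pos c with h | h
      · exfalso
        have hp : 0 < lam ^ K := pow_pos hln K
        rw [hc, h, Nat.mul_zero] at hp
        exact lt_irrefl 0 hp
      · exact h
    have hb1 : (0:ℤ) ≤ (q : ℤ) * lam ^ N₁ := by positivity
    have hb2 : (0:ℤ) ≤ (q : ℤ) * lam ^ N₂ := by positivity
    have hcz : (0:ℤ) ≤ (c : ℤ) := Int.natCast_nonneg c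
    refine ⟨N₁ + N₂ + K, m₁ * m₂ * c, mul_nonneg (mul_nonneg h₁0 h₂0) hcz, ?_, ?_⟩
    · have hstep : m₁ * m₂ ≤ ((q : ℤ) * lam ^ N₁) * ((q : ℤ) * lam ^ N₂) :=
        mul_le_mul h₁le h₂le h₂0 hb1
      have hstep2 : m₁ * m₂ * c ≤ ((q : ℤ) * lam ^ N₁) * ((q : ℤ) * lam ^ N₂) * c :=
        mul_le_mul_of_nonneg_right hstep hcz
      refine hstep2.trans_eq ?_
      have hcZ : ((lam : ℤ)) ^ K = (q : ℤ) * c := by exact_mod_cast hc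
      rw [pow_add, pow_add, hcZ]
      ring
    · have hcR : ((lam : ℝ) ^ K) = q * c := by exact_mod_cast congrArg (Nat.cast : ℕ → ℝ) hc
      have hc0R : (c : ℝ) ≠ 0 := by exact_mod_cast hc0.ne'
      push_cast
      rw [pow_add, pow_add, hcR]
      field_simp
end
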